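/- Let S be a finite collection of non-increasing bar charts. Then there exists an ordering (permutation) σ of S such that the greedy packing q with respect to the order σ—defined by q(σ(1)) = 1 and q(σ(k+1)) = the least integer m ≥ q(σ(k)) such that placing BC σ(k+1) at cell m keeps the packing feasible—is a feasible packing with L(q) = OPT(S), the minimum length over all feasible packings of S. -/

import Mathlib

/-!
A bar chart (BC) `i` has `l i` bars with heights `h i 0, …, h i (l i - 1)` in `(0,1]`.
A packing `p` places bar `j` of BC `i` in cell `p i + j` (cells are `1, 2, …`).
-/

/-- Validity of the data: each BC is nonempty and all bar heights lie in `(0,1]`. -/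
def ValidBC {n : ℕ} (l : Fin n → ℕ) (h : Fin n → ℕ → ℝ) : Prop :=
  (∀ i, 0 < l i) ∧ ∀ i j, j < l i → h i j ∈ Set.Ioc (0 : ℝ) 1

/-- Total height of the bars lying in cell `c` under packing `p`. -/
def cellLoad {n : ℕ} (l : Fin n → ℕ) (h : Fin n → ℕ → ℝ) (p : Fin n → ℕ) (c : ℕ) : ℝ :=
  ∑ i, ∑ j ∈ Finset.range (l i), if p i + j = c then h i j else 0

/-- A packing is feasible if cells start at 1 and every cell carries total height at most 1. -/
def Feasible {n : ℕ} (l : Fin n → ℕ) (h : Fin n → ℕ → ℝ) (p : Fin n → ℕ) : Prop :=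
  (∀ i, 1 ≤ p i) ∧ ∀ c, cellLoad l h p c ≤ 1

/-- The (finite) set of cells containing at least one bar. -/
def occupied {n : ℕ} (l : Fin n → ℕ) (p : Fin n → ℕ) : Finset ℕ :=
  (Finset.univ.sigma fun i => Finset.range (l i)).image fun x => p x.1 + x.2

/-- The length of a packing: the number of cells containing at least one bar. -/
def packLen {n : ℕ} (l : Fin n → ℕ) (p : Fin n → ℕ) : ℕ :=
  (occupied l p).card

/-- The minimum length of a feasible packing. -/
noncomputable def OPT {n : ℕ} (l : Fin n → ℕ) (h : Fin n → ℕ → ℝ) : ℕ :=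
  sInf {m | ∃ p, Feasible l h p ∧ packLen l p = m}

/-- Contribution to cell `c` of BC `i` when placed at cell `m`. -/
def bcLoad {n : ℕ} (l : Fin n → ℕ) (h : Fin n → ℕ → ℝ) (i : Fin n) (m c : ℕ) : ℝ :=
  ∑ j ∈ Finset.range (l i), if m + j = c then h i j else 0

/-- Total height in cell `c` contributed by the BCs of index less than `K`. -/
def partialLoad {n : ℕ} (l : Fin n → ℕ) (h : Fin n → ℕ → ℝ) (q : Fin n → ℕ)
    (K c : ℕ) : ℝ :=
  ∑ i : Fin n, if (i : ℕ) < K then bcLoad l h i (q i) c else 0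

/-- `q` is the greedy packing: BC 1 is placed at cell 1 and, inductively, BC `k+1`
is placed at the least cell `m ≥ q k` such that placing it there keeps the packing
of the first `k+1` BCs feasible. -/
def IsGreedy {n : ℕ} (l : Fin n → ℕ) (h : Fin n → ℕ → ℝ) (q : Fin n → ℕ) : Prop :=
  (∀ h0 : 0 < n, q ⟨0, h0⟩ = 1) ∧
  ∀ (k : ℕ) (hk : k + 1 < n),
    q ⟨k + 1, hk⟩ = sInf {m | q ⟨k, Nat.lt_of_succ_lt hk⟩ ≤ m ∧
      ∀ c, partialLoad l h q (k + 1) c + bcLoad l h ⟨k + 1, hk⟩ m c ≤ 1}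

/-- Total height in cell `c` contributed by the first `K` BCs in the order `σ`. -/
def partialLoadWrt {n : ℕ} (l : Fin n → ℕ) (h : Fin n → ℕ → ℝ)
    (σ : Equiv.Perm (Fin n)) (q : Fin n → ℕ) (K c : ℕ) : ℝ :=
  ∑ t : Fin n, if (t : ℕ) < K then bcLoad l h (σ t) (q (σ t)) c else 0

/-- `q` is the greedy packing with respect to the order `σ`: BC `σ 1` is placed at
cell 1 and, inductively, BC `σ (k+1)` is placed at the least cell
`m ≥ q (σ k)` such that placing it there keeps the packing of `σ 1, …, σ (k+1)`
feasible. -/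
def IsGreedyWrt {n : ℕ} (l : Fin n → ℕ) (h : Fin n → ℕ → ℝ)
    (σ : Equiv.Perm (Fin n)) (q : Fin n → ℕ) : Prop :=
  (∀ h0 : 0 < n, q (σ ⟨0, h0⟩) = 1) ∧
  ∀ (k : ℕ) (hk : k + 1 < n),
    q (σ ⟨k + 1, hk⟩) = sInf {m | q (σ ⟨k, Nat.lt_of_succ_lt hk⟩) ≤ m ∧
      ∀ c, partialLoadWrt l h σ q (k + 1) c + bcLoad l h (σ ⟨k + 1, hk⟩) m c ≤ 1}

section Lemmas
variable {n : ℕ} (l : Fin n → ℕ) (h : Fin n → ℕ → ℝ)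

lemma bcLoad_eq (i : Fin n) (m c : ℕ) :
    bcLoad l h i m c = if m ≤ c ∧ c - m < l i then h i (c - m) else 0 := by
  unfold bcLoad
  have step : bcLoad l h i m c = ∑ j ∈ Finset.range (l i), if j = c - m ∧ m ≤ c then h i j else 0 := by
    unfold bcLoad
    refine Finset.sum_congr rfl fun j _ => ?_
    by_cases hj : m + j = c
    · rw [if_pos hj, if_pos ⟨by omega, by omega⟩]
    · rw [if_neg hj, if_neg (by omega)]
  rw [← bcLoad, step]
  by_cases hmc : m ≤ c
  · simp only [hmc, and_true]
    rw [Finset.sum_ite_eq' (Finset.range (l i)) (c - m) (h i)]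
    simp [Finset.mem_range]
  · rw [if_neg (by omega)]
    exact Finset.sum_eq_zero fun j _ => if_neg (by omega)

variable (hval : ValidBC l h)
include hval

lemma h_nonneg {i : Fin n} {j : ℕ} (hj : j < l i) : 0 ≤ h i j :=
  le_of_lt (hval.2 i j hj).1

lemma h_le_one {i : Fin n} {j : ℕ} (hj : j < l i) : h i j ≤ 1 :=
  (hval.2 i j hj).2

lemma bcLoad_nonneg (i : Fin n) (m c : ℕ) : 0 ≤ bcLoad l h i m c := by
  refine Finset.sum_nonneg fun j hj => ?_
  split
  · exact h_nonneg l h hval (Finset.mem_range.mp hj)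
  · exact le_refl 0

lemma bcLoad_le_one (i : Fin n) (m c : ℕ) : bcLoad l h i m c ≤ 1 := by
  rw [bcLoad_eq]
  split
  · exact h_le_one l h hval (by omega)
  · norm_num

omit hval in
lemma h_anti (hni : ∀ (i : Fin n) (j : ℕ), j + 1 < l i → h i (j + 1) ≤ h i j)
    {i : Fin n} {j j' : ℕ} (hjj : j ≤ j') (hj' : j' < l i) : h i j' ≤ h i j := by
  induction j', hjj using Nat.le_induction with
  | base => exact le_refl _
  | succ j' hj ih => exact (hni i j' hj').trans (ih (by omega))

lemma bcLoad_anti (hni : ∀ (i : Fin n) (j : ℕ), j + 1 < l i → h i (j + 1) ≤ h i j)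
    {i : Fin n} {m m' c : ℕ} (hmm : m ≤ m') (hmc : m' ≤ c) :
    bcLoad l h i m c ≤ bcLoad l h i m' c := by
  rw [bcLoad_eq, bcLoad_eq]
  by_cases h1 : c - m < l i
  · rw [if_pos ⟨by omega, h1⟩, if_pos ⟨hmc, by omega⟩]
    exact h_anti l h hni (by omega) h1
  · rw [if_neg (by omega)]
    split
    · exact h_nonneg l h hval (by omega)
    · exact le_refl _

omit hval in
lemma mem_occupied {p : Fin n → ℕ} {c : ℕ} :
    c ∈ occupied l p ↔ ∃ i, ∃ j < l i, p i + j = c := by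
  unfold occupied
  simp [Finset.mem_image, Finset.mem_sigma, Sigma.exists]

omit hval in
lemma cellLoad_eq_sum (p : Fin n → ℕ) (c : ℕ) :
    cellLoad l h p c = ∑ i, bcLoad l h i (p i) c := rfl

omit hval in
lemma cellLoad_eq_zero {p : Fin n → ℕ} {c : ℕ} (hc : c ∉ occupied l p) :
    cellLoad l h p c = 0 := by
  rw [cellLoad_eq_sum]
  refine Finset.sum_eq_zero fun i _ => ?_
  rw [bcLoad_eq, if_neg]
  rintro ⟨h1, h2⟩
  exact hc ((mem_occupied l).mpr ⟨i, c - p i, h2, by omega⟩)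

lemma partialLoadWrt_le_cellLoad (σ : Equiv.Perm (Fin n)) (q : Fin n → ℕ) (K c : ℕ) :
    partialLoadWrt l h σ q K c ≤ cellLoad l h q c := by
  rw [cellLoad_eq_sum, ← Equiv.sum_comp σ (fun i => bcLoad l h i (q i) c)]
  refine Finset.sum_le_sum fun t _ => ?_
  split
  · exact le_refl _
  · exact bcLoad_nonneg l h hval _ _ _

omit hval in
lemma partialLoadWrt_all (σ : Equiv.Perm (Fin n)) (q : Fin n → ℕ) {K : ℕ} (hK : n ≤ K) (c : ℕ) :
    partialLoadWrt l h σ q K c = cellLoad l h q c := by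
  rw [cellLoad_eq_sum, ← Equiv.sum_comp σ (fun i => bcLoad l h i (q i) c)]
  exact Finset.sum_congr rfl fun t _ => if_pos (lt_of_lt_of_le t.isLt hK)

omit hval in
lemma partialLoadWrt_succ (σ : Equiv.Perm (Fin n)) (q : Fin n → ℕ) {k : ℕ} (hk : k < n) (c : ℕ) :
    partialLoadWrt l h σ q (k + 1) c =
      partialLoadWrt l h σ q k c + bcLoad l h (σ ⟨k, hk⟩) (q (σ ⟨k, hk⟩)) c := by
  unfold partialLoadWrt
  have : ∀ t : Fin n,
      (if (t : ℕ) < k + 1 then bcLoad l h (σ t) (q (σ t)) c else 0) =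
      (if (t : ℕ) < k then bcLoad l h (σ t) (q (σ t)) c else 0) +
      (if t = ⟨k, hk⟩ then bcLoad l h (σ t) (q (σ t)) c else 0) := by
    intro t
    by_cases h1 : (t : ℕ) < k
    · rw [if_pos (by omega), if_pos h1, if_neg (by intro he; subst he; simp at h1), add_zero]
    · by_cases h2 : (t : ℕ) = k
      · have : t = ⟨k, hk⟩ := Fin.ext h2
        subst this
        rw [if_pos (by omega), if_neg (by omega), if_pos rfl, zero_add]
      · rw [if_neg (by omega), if_neg (by omega), if_neg (by intro he; subst he; simp at h2), add_zero]
  rw [Finset.sum_congr rfl fun t _ => this t, Finset.sum_add_distrib]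
  congr 1
  rw [Finset.sum_ite_eq' Finset.univ (⟨k, hk⟩ : Fin n)]
  simp

lemma partialLoadWrt_nonneg (σ : Equiv.Perm (Fin n)) (q : Fin n → ℕ) (K c : ℕ) :
    0 ≤ partialLoadWrt l h σ q K c := by
  refine Finset.sum_nonneg fun t _ => ?_
  split
  · exact bcLoad_nonneg l h hval _ _ _
  · exact le_refl _

end Lemmas
section Lemmas2
variable {n : ℕ} (l : Fin n → ℕ) (h : Fin n → ℕ → ℝ)

/-- A packing has no gaps: every cell below an occupied cell is occupied. -/
def Gapless (p : Fin n → ℕ) : Prop :=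
  ∀ c, 1 ≤ c → (∃ c' ∈ occupied l p, c < c') → c ∈ occupied l p

lemma exists_feasible (hval : ValidBC l h) : ∃ p, Feasible l h p := by
  classical
  set p : Fin n → ℕ := fun i => 1 + ∑ t ∈ Finset.univ.filter (fun t => t < i), l t with hp
  have key : ∀ i i' : Fin n, i < i' → p i + l i ≤ p i' := by
    intro i i' hii
    have hsub : insert i (Finset.univ.filter (fun t => t < i)) ⊆
        Finset.univ.filter (fun t => t < i') := by
      intro t ht
      rcases Finset.mem_insert.mp ht with rfl | ht
      · simp [hii]
      · simp only [Finset.mem_filter, Finset.mem_univ, true_and] at ht ⊢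
        exact ht.trans hii
    have hs := Finset.sum_le_sum_of_subset (f := l) hsub
    rw [Finset.sum_insert (by simp)] at hs
    simp only [hp]
    omega
  refine ⟨p, fun i => by simp [hp], fun c => ?_⟩
  rw [cellLoad_eq_sum]
  by_cases hex : ∃ i0 : Fin n, bcLoad l h i0 (p i0) c ≠ 0
  · obtain ⟨i0, hi0⟩ := hex
    rw [Finset.sum_eq_single_of_mem i0 (Finset.mem_univ _)]
    · exact bcLoad_le_one l h hval _ _ _
    · intro i _ hne
      have hcov0 : p i0 ≤ c ∧ c - p i0 < l i0 := by
        by_contra hcon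
        rw [bcLoad_eq, if_neg hcon] at hi0
        exact hi0 rfl
      rw [bcLoad_eq, if_neg]
      rintro ⟨h1, h2⟩
      rcases lt_or_gt_of_ne hne with hlt | hlt
      · have := key i i0 hlt; omega
      · have := key i0 i hlt; omega
  · push_neg at hex
    rw [Finset.sum_eq_zero fun i _ => hex i]
    norm_num

lemma opt_spec (hval : ValidBC l h) :
    ∃ p, Feasible l h p ∧ packLen l p = OPT l h := by
  obtain ⟨p, hp⟩ := exists_feasible l h hval
  have : OPT l h ∈ {m | ∃ p, Feasible l h p ∧ packLen l p = m} :=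
    Nat.sInf_mem ⟨packLen l p, p, hp, rfl⟩
  exact this

lemma exists_gapless_opt (hval : ValidBC l h) :
    ∃ p, Feasible l h p ∧ packLen l p = OPT l h ∧ Gapless l p := by
  classical
  set S : Set ℕ := {s | ∃ p, Feasible l h p ∧ packLen l p = OPT l h ∧ ∑ i, p i = s} with hS
  have hSne : S.Nonempty := by
    obtain ⟨p, h1, h2⟩ := opt_spec l h hval
    exact ⟨∑ i, p i, p, h1, h2, rfl⟩
  obtain ⟨p, hfeas, hlen, hsum⟩ := Nat.sInf_mem hSne
  refine ⟨p, hfeas, hlen, ?_⟩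
  intro c hc ⟨c', hc', hcc'⟩
  by_contra hcnot
  -- intervals meeting c would occupy c
  have hint : ∀ i : Fin n, p i ≤ c → p i + l i ≤ c := by
    intro i hi
    by_contra hcon
    exact hcnot ((mem_occupied l).mpr ⟨i, c - p i, by omega, by omega⟩)
  set p' : Fin n → ℕ := fun i => if c < p i then p i - 1 else p i with hp'
  have hple : ∀ i, p' i ≤ p i := by intro i; simp only [hp']; split <;> omega
  -- c' is occupied: some chart starts after c
  obtain ⟨i1, j1, hj1, hij1⟩ := (mem_occupied l).mp hc'
  have hi1 : c < p i1 := by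
    by_contra hcon
    have := hint i1 (by omega)
    omega
  have hfeas' : Feasible l h p' := by
    constructor
    · intro i
      have := hfeas.1 i
      simp only [hp']; split <;> omega
    · intro c''
      rw [cellLoad_eq_sum]
      rcases lt_or_ge c'' c with hcase | hcase
      · calc ∑ i, bcLoad l h i (p' i) c'' ≤ ∑ i, bcLoad l h i (p i) c'' := by
              refine Finset.sum_le_sum fun i _ => ?_
              by_cases hci : c < p i
              · rw [bcLoad_eq, bcLoad_eq, if_neg (by simp only [hp', if_pos hci]; omega),
                  if_neg (by omega)]
              · simp only [hp', if_neg hci]; exact le_refl _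
          _ ≤ 1 := by rw [← cellLoad_eq_sum]; exact hfeas.2 c''
      · calc ∑ i, bcLoad l h i (p' i) c'' ≤ ∑ i, bcLoad l h i (p i) (c'' + 1) := by
              refine Finset.sum_le_sum fun i _ => ?_
              by_cases hci : c < p i
              · have : p' i = p i - 1 := by simp [hp', hci]
                rw [this, bcLoad_eq, bcLoad_eq]
                have hiff : (p i - 1 ≤ c'' ∧ c'' - (p i - 1) < l i) ↔
                    (p i ≤ c'' + 1 ∧ c'' + 1 - p i < l i) := by omega
                by_cases hcond : p i - 1 ≤ c'' ∧ c'' - (p i - 1) < l i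
                · rw [if_pos hcond, if_pos (hiff.mp hcond)]
                  have : c'' - (p i - 1) = c'' + 1 - p i := by omega
                  rw [this]
                · rw [if_neg hcond, if_neg (fun hx => hcond (hiff.mpr hx))]
              · have hpi : p' i = p i := by simp [hp', hci]
                rw [hpi, bcLoad_eq]
                have hend := hint i (by omega)
                rw [if_neg (by omega)]
                exact bcLoad_nonneg l h hval _ _ _
          _ ≤ 1 := by rw [← cellLoad_eq_sum]; exact hfeas.2 (c'' + 1)
  set f : ℕ → ℕ := fun x => if c < x then x - 1 else x with hf
  have hocc : occupied l p' = (occupied l p).image f := by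
    ext c''
    simp only [mem_occupied, Finset.mem_image]
    constructor
    · rintro ⟨i, j, hj, hij⟩
      refine ⟨p i + j, ⟨i, j, hj, rfl⟩, ?_⟩
      by_cases hci : c < p i
      · have h1 : p' i = p i - 1 := by simp [hp', hci]
        simp only [hf]
        rw [if_pos (by omega)]
        omega
      · have h1 : p' i = p i := by simp [hp', hci]
        have := hint i (by omega)
        simp only [hf]
        rw [if_neg (by omega)]
        omega
    · rintro ⟨x, hx, hfx⟩
      obtain ⟨i, j, hj, hij⟩ := hx
      refine ⟨i, j, hj, ?_⟩
      by_cases hci : c < p i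
      · have h1 : p' i = p i - 1 := by simp [hp', hci]
        have hpi1 := hfeas.1 i
        simp only [hf] at hfx
        rw [if_pos (by omega)] at hfx
        omega
      · have h1 : p' i = p i := by simp [hp', hci]
        have := hint i (by omega)
        simp only [hf] at hfx
        rw [if_neg (by omega)] at hfx
        omega
  have hinj : Set.InjOn f (occupied l p : Set ℕ) := by
    intro x hx y hy hxy
    simp only [Finset.coe_sort_coe, Finset.mem_coe] at hx hy
    have hxc : x ≠ c := fun he => hcnot (he ▸ hx)
    have hyc : y ≠ c := fun he => hcnot (he ▸ hy)
    simp only [hf] at hxy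
    split_ifs at hxy <;> omega
  have hlen' : packLen l p' = packLen l p := by
    unfold packLen
    rw [hocc, Finset.card_image_of_injOn hinj]
  have hsum' : ∑ i, p' i < ∑ i, p i := by
    refine Finset.sum_lt_sum (fun i _ => hple i) ⟨i1, Finset.mem_univ _, ?_⟩
    have := hfeas.1 i1
    simp only [hp']
    rw [if_pos hi1]
    omega
  have : ∑ i, p' i ∈ S := ⟨p', hfeas', by rw [hlen', hlen], rfl⟩
  have := Nat.sInf_le this
  omega

lemma gapless_len {p : Fin n → ℕ} (hn : 0 < n) (hl : ∀ i, 0 < l i)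
    (hp1 : ∀ i, 1 ≤ p i) (hg : Gapless l p) :
    ∃ M, occupied l p = Finset.Icc 1 M ∧ packLen l p = M := by
  have hne : (occupied l p).Nonempty := by
    refine ⟨p ⟨0, hn⟩, (mem_occupied l).mpr ⟨⟨0, hn⟩, 0, hl _, by omega⟩⟩
  set M := (occupied l p).max' hne with hM
  refine ⟨M, ?_, ?_⟩
  · apply Finset.Subset.antisymm
    · intro c hcocc
      obtain ⟨i, j, hj, hij⟩ := (mem_occupied l).mp hcocc
      exact Finset.mem_Icc.mpr ⟨by have := hp1 i; omega, Finset.le_max' _ _ hcocc⟩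
    · intro c hc
      rw [Finset.mem_Icc] at hc
      rcases eq_or_lt_of_le hc.2 with rfl | hlt
      · exact Finset.max'_mem _ _
      · exact hg c hc.1 ⟨M, Finset.max'_mem _ _, hlt⟩
  · have : occupied l p = Finset.Icc 1 M := by
      apply Finset.Subset.antisymm
      · intro c hcocc
        obtain ⟨i, j, hj, hij⟩ := (mem_occupied l).mp hcocc
        exact Finset.mem_Icc.mpr ⟨by have := hp1 i; omega, Finset.le_max' _ _ hcocc⟩
      · intro c hc
        rw [Finset.mem_Icc] at hc
        rcases eq_or_lt_of_le hc.2 with rfl | hlt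
        · exact Finset.max'_mem _ _
        · exact hg c hc.1 ⟨M, Finset.max'_mem _ _, hlt⟩
    rw [packLen, this, Nat.card_Icc]
    omega

end Lemmas2
/-- The greedy positions along the order `σ`. -/
noncomputable def gr {n : ℕ} (l : Fin n → ℕ) (h : Fin n → ℕ → ℝ)
    (σ : Equiv.Perm (Fin n)) : ℕ → ℕ
  | 0 => 1
  | k + 1 =>
    if hk : k + 1 < n then
      sInf {m | gr l h σ k ≤ m ∧ ∀ c,
        (∑ t : Fin n, if ht : (t : ℕ) < k + 1 then bcLoad l h (σ t) (gr l h σ (t : ℕ)) c else 0)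
          + bcLoad l h (σ ⟨k + 1, hk⟩) m c ≤ 1}
    else 1
termination_by k => k
decreasing_by
  · omega
  · omega

/-- The greedy packing along the order `σ`. -/
noncomputable def grq {n : ℕ} (l : Fin n → ℕ) (h : Fin n → ℕ → ℝ)
    (σ : Equiv.Perm (Fin n)) : Fin n → ℕ := fun i => gr l h σ ((σ.symm i : Fin n) : ℕ)

section Lemmas3
variable {n : ℕ} (l : Fin n → ℕ) (h : Fin n → ℕ → ℝ) (σ : Equiv.Perm (Fin n))

lemma grq_sigma (t : Fin n) : grq l h σ (σ t) = gr l h σ (t : ℕ) := by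
  simp [grq]

lemma partial_grq (K c : ℕ) :
    partialLoadWrt l h σ (grq l h σ) K c =
      ∑ t : Fin n, if (t : ℕ) < K then bcLoad l h (σ t) (gr l h σ (t : ℕ)) c else 0 := by
  refine Finset.sum_congr rfl fun t _ => ?_
  rw [grq_sigma]

lemma gr_succ_eq {k : ℕ} (hk : k + 1 < n) :
    gr l h σ (k + 1) = sInf {m | gr l h σ k ≤ m ∧ ∀ c,
      partialLoadWrt l h σ (grq l h σ) (k + 1) c + bcLoad l h (σ ⟨k + 1, hk⟩) m c ≤ 1} := by
  conv_lhs => rw [gr]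
  rw [dif_pos hk]
  congr 1
  ext m
  constructor <;> rintro ⟨h1, h2⟩ <;> refine ⟨h1, fun c => ?_⟩
  · rw [partial_grq]
    have := h2 c
    simpa [dite_eq_ite] using this
  · have := h2 c
    rw [partial_grq] at this
    simpa [dite_eq_ite] using this

end Lemmas3
section Lemmas4
variable {n : ℕ} (l : Fin n → ℕ) (h : Fin n → ℕ → ℝ) (σ : Equiv.Perm (Fin n))

lemma gr_zero : gr l h σ 0 = 1 := by rw [gr]

lemma partial_zero (q : Fin n → ℕ) (c : ℕ) : partialLoadWrt l h σ q 0 c = 0 :=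
  Finset.sum_eq_zero fun t _ => if_neg (by omega)

lemma gr_inv (hval : ValidBC l h)
    (hni : ∀ (i : Fin n) (j : ℕ), j + 1 < l i → h i (j + 1) ≤ h i j)
    (p : Fin n → ℕ) (hpf : Feasible l h p)
    (hmono : ∀ s t : Fin n, s ≤ t → p (σ s) ≤ p (σ t)) :
    ∀ k, k < n →
      (∀ c, partialLoadWrt l h σ (grq l h σ) (k + 1) c ≤ 1) ∧
      (∀ t, t ≤ k → ∀ (ht : t < n), 1 ≤ gr l h σ t ∧ gr l h σ t ≤ p (σ ⟨t, ht⟩)) ∧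
      (∀ t, t < k → gr l h σ t ≤ gr l h σ (t + 1)) := by
  intro k
  induction k with
  | zero =>
    intro hn
    refine ⟨fun c => ?_, fun t ht ht' => ?_, fun t ht => by omega⟩
    · rw [partialLoadWrt_succ l h σ (grq l h σ) hn c, partial_zero, zero_add]
      have : grq l h σ (σ ⟨0, hn⟩) = 1 := by rw [grq_sigma]; exact gr_zero l h σ
      rw [this]
      exact bcLoad_le_one l h hval _ _ _
    · interval_cases t
      rw [gr_zero]
      exact ⟨le_refl _, hpf.1 _⟩
  | succ k ih =>
    intro hk
    obtain ⟨ihF, ihP, ihM⟩ := ih (by omega)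
    -- the position of σ (k+1) in the optimal packing is a candidate for greedy
    have member : p (σ ⟨k + 1, hk⟩) ∈ {m | gr l h σ k ≤ m ∧ ∀ c,
        partialLoadWrt l h σ (grq l h σ) (k + 1) c + bcLoad l h (σ ⟨k + 1, hk⟩) m c ≤ 1} := by
      constructor
      · exact le_trans ((ihP k (le_refl _) (by omega)).2)
          (hmono _ _ (by rw [Fin.mk_le_mk]; omega))
      · intro c
        by_cases hbc : bcLoad l h (σ ⟨k + 1, hk⟩) (p (σ ⟨k + 1, hk⟩)) c = 0
        · rw [hbc, add_zero]; exact ihF c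
        · have hpc : p (σ ⟨k + 1, hk⟩) ≤ c := by
            by_contra hcon
            exact hbc (by rw [bcLoad_eq, if_neg (by omega)])
          have hcomp : partialLoadWrt l h σ (grq l h σ) (k + 1) c ≤
              partialLoadWrt l h σ p (k + 1) c := by
            rw [partial_grq]
            unfold partialLoadWrt
            refine Finset.sum_le_sum fun t _ => ?_
            by_cases ht : (t : ℕ) < k + 1
            · rw [if_pos ht, if_pos ht]
              have h1 : gr l h σ (t : ℕ) ≤ p (σ t) := by
                have := (ihP (t : ℕ) (by omega) t.isLt).2
                simpa using this
              have h2 : p (σ t) ≤ c :=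
                le_trans (hmono t ⟨k + 1, hk⟩ (by rw [Fin.le_def]; simp; omega)) hpc
              exact bcLoad_anti l h hval hni h1 h2
            · rw [if_neg ht, if_neg ht]
          calc partialLoadWrt l h σ (grq l h σ) (k + 1) c
                + bcLoad l h (σ ⟨k + 1, hk⟩) (p (σ ⟨k + 1, hk⟩)) c
              ≤ partialLoadWrt l h σ p (k + 1) c
                + bcLoad l h (σ ⟨k + 1, hk⟩) (p (σ ⟨k + 1, hk⟩)) c := by
                exact add_le_add hcomp (le_refl _)
            _ = partialLoadWrt l h σ p (k + 2) c := (partialLoadWrt_succ l h σ p hk c).symm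
            _ ≤ cellLoad l h p c := partialLoadWrt_le_cellLoad l h hval σ p _ c
            _ ≤ 1 := hpf.2 c
    have hne : Set.Nonempty {m | gr l h σ k ≤ m ∧ ∀ c,
        partialLoadWrt l h σ (grq l h σ) (k + 1) c + bcLoad l h (σ ⟨k + 1, hk⟩) m c ≤ 1} :=
      ⟨_, member⟩
    have hmem := Nat.sInf_mem hne
    rw [← gr_succ_eq l h σ hk] at hmem
    obtain ⟨hstep, hfeas'⟩ := hmem
    have hle : gr l h σ (k + 1) ≤ p (σ ⟨k + 1, hk⟩) := by
      rw [gr_succ_eq l h σ hk]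
      exact Nat.sInf_le member
    refine ⟨fun c => ?_, fun t ht ht' => ?_, fun t ht => ?_⟩
    · rw [partialLoadWrt_succ l h σ (grq l h σ) hk c]
      have : grq l h σ (σ ⟨k + 1, hk⟩) = gr l h σ (k + 1) := by
        rw [grq_sigma]
      rw [this]
      exact hfeas' c
    · rcases Nat.lt_or_ge t (k + 1) with h1 | h1
      · exact ihP t (by omega) ht'
      · have : t = k + 1 := by omega
        subst this
        refine ⟨le_trans (ihP k (le_refl _) (by omega)).1 hstep, ?_⟩
        convert hle using 3
    · rcases Nat.lt_or_ge t k with h1 | h1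
      · exact ihM t h1
      · have : t = k := by omega
        subst this
        exact hstep
end Lemmas4
section Lemmas5
variable {n : ℕ} (l : Fin n → ℕ) (h : Fin n → ℕ → ℝ) (σ : Equiv.Perm (Fin n))

lemma grq_isGreedy : IsGreedyWrt l h σ (grq l h σ) := by
  constructor
  · intro h0
    rw [grq_sigma]
    exact gr_zero l h σ
  · intro k hk
    simp only [grq_sigma]
    exact gr_succ_eq l h σ hk

lemma grq_feasible (hval : ValidBC l h)
    (hni : ∀ (i : Fin n) (j : ℕ), j + 1 < l i → h i (j + 1) ≤ h i j)
    (p : Fin n → ℕ) (hpf : Feasible l h p)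
    (hmono : ∀ s t : Fin n, s ≤ t → p (σ s) ≤ p (σ t)) (hn : 0 < n) :
    Feasible l h (grq l h σ) := by
  obtain ⟨invF, invP, _⟩ := gr_inv l h σ hval hni p hpf hmono (n - 1) (by omega)
  constructor
  · intro i
    exact (invP ((σ.symm i : Fin n) : ℕ) (by omega) (σ.symm i).isLt).1
  · intro c
    have h1 : cellLoad l h (grq l h σ) c = partialLoadWrt l h σ (grq l h σ) n c :=
      (partialLoadWrt_all l h σ (grq l h σ) (le_refl n) c).symm
    rw [h1]
    have := invF c
    rwa [show n - 1 + 1 = n by omega] at this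

lemma grq_qle (hval : ValidBC l h)
    (hni : ∀ (i : Fin n) (j : ℕ), j + 1 < l i → h i (j + 1) ≤ h i j)
    (p : Fin n → ℕ) (hpf : Feasible l h p)
    (hmono : ∀ s t : Fin n, s ≤ t → p (σ s) ≤ p (σ t)) (hn : 0 < n) (i : Fin n) :
    grq l h σ i ≤ p i := by
  obtain ⟨_, invP, _⟩ := gr_inv l h σ hval hni p hpf hmono (n - 1) (by omega)
  have := (invP ((σ.symm i : Fin n) : ℕ) (by omega) (σ.symm i).isLt).2
  simpa [grq] using this

lemma grq_gapless (hval : ValidBC l h)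
    (hni : ∀ (i : Fin n) (j : ℕ), j + 1 < l i → h i (j + 1) ≤ h i j)
    (p : Fin n → ℕ) (hpf : Feasible l h p)
    (hmono : ∀ s t : Fin n, s ≤ t → p (σ s) ≤ p (σ t)) (hn : 0 < n) :
    Gapless l (grq l h σ) := by
  intro c hc hex
  obtain ⟨c', hc', hcc'⟩ := hex
  by_contra hcnot
  suffices hstep : ∀ d, 1 ≤ d → d ∉ occupied l (grq l h σ) → d + 1 ∉ occupied l (grq l h σ) by
    have hall : ∀ m, c + m ∉ occupied l (grq l h σ) := by
      intro m
      induction m with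
      | zero => simpa using hcnot
      | succ m ihm => exact hstep (c + m) (by omega) ihm
    have := hall (c' - c)
    rw [show c + (c' - c) = c' by omega] at this
    exact this hc'
  intro d hd hdnot hd1occ
  obtain ⟨i, j, hj, hij⟩ := (mem_occupied l).mp hd1occ
  have hqi : grq l h σ i = d + 1 := by
    by_contra hne
    have hle : grq l h σ i ≤ d := by omega
    exact hdnot ((mem_occupied l).mpr ⟨i, d - grq l h σ i, by omega, by omega⟩)
  obtain ⟨K, hKn, hKval, hKmin⟩ :
      ∃ K, K < n ∧ gr l h σ K = d + 1 ∧ ∀ k' < K, gr l h σ k' ≠ d + 1 := by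
    have hK0 : ((σ.symm i : Fin n) : ℕ) ∈ {k | k < n ∧ gr l h σ k = d + 1} :=
      ⟨(σ.symm i).isLt, hqi⟩
    have hne : Set.Nonempty {k | k < n ∧ gr l h σ k = d + 1} := ⟨_, hK0⟩
    refine ⟨sInf _, (Nat.sInf_mem hne).1, (Nat.sInf_mem hne).2, fun k' hk' hcon => ?_⟩
    have := Nat.sInf_le (s := {k | k < n ∧ gr l h σ k = d + 1})
      ⟨by have := (Nat.sInf_mem hne).1; omega, hcon⟩
    omega
  rcases K with _ | k
  · rw [gr_zero] at hKval
    omega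
  · have hgrk : gr l h σ k ≤ d := by
      have h1 := (gr_inv l h σ hval hni p hpf hmono (k + 1) hKn).2.2 k (by omega)
      have h2 := hKmin k (by omega)
      omega
    have ihF := (gr_inv l h σ hval hni p hpf hmono k (by omega)).1
    have hfeasK := (gr_inv l h σ hval hni p hpf hmono (k + 1) hKn).1
    have hfeas2 : ∀ c'', partialLoadWrt l h σ (grq l h σ) (k + 1) c''
        + bcLoad l h (σ ⟨k + 1, hKn⟩) (d + 1) c'' ≤ 1 := by
      intro c''
      have hx := hfeasK c''
      rw [partialLoadWrt_succ l h σ (grq l h σ) hKn c''] at hx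
      rw [grq_sigma] at hx
      have hv : gr l h σ ((⟨k + 1, hKn⟩ : Fin n) : ℕ) = d + 1 := hKval
      rwa [hv] at hx
    have hload_d : partialLoadWrt l h σ (grq l h σ) (k + 1) d ≤ 0 := by
      calc partialLoadWrt l h σ (grq l h σ) (k + 1) d
          ≤ cellLoad l h (grq l h σ) d := partialLoadWrt_le_cellLoad l h hval σ _ _ _
        _ = 0 := cellLoad_eq_zero l h hdnot
    have member : d ∈ {m | gr l h σ k ≤ m ∧ ∀ c'', partialLoadWrt l h σ (grq l h σ) (k + 1) c''
        + bcLoad l h (σ ⟨k + 1, hKn⟩) m c'' ≤ 1} := by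
      refine ⟨hgrk, fun c'' => ?_⟩
      rw [bcLoad_eq]
      split_ifs with hcond
      · obtain ⟨hdc, hlc⟩ := hcond
        rcases Nat.eq_or_lt_of_le hdc with heq | hlt
        · subst heq
          rw [Nat.sub_self]
          have h0l : 0 < l (σ ⟨k + 1, hKn⟩) := hval.1 _
          have := h_le_one l h hval h0l
          linarith
        · have h2 : h (σ ⟨k + 1, hKn⟩) (c'' - d) ≤ h (σ ⟨k + 1, hKn⟩) (c'' - d - 1) :=
            h_anti l h hni (by omega) hlc
          have h3 := hfeas2 c''
          rw [bcLoad_eq, if_pos ⟨by omega, by omega⟩] at h3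
          rw [show c'' - (d + 1) = c'' - d - 1 by omega] at h3
          linarith
      · rw [add_zero]
        exact ihF c''
    have : gr l h σ (k + 1) ≤ d := by
      rw [gr_succ_eq l h σ hKn]
      exact Nat.sInf_le member
    omega

end Lemmas5
/-- for every finite collection of non-increasing BCs there is an
ordering `σ` such that the greedy packing with respect to `σ` is feasible and
achieves the minimum length over all feasible packings. -/
theorem exists_order_greedy_optimal {n : ℕ} (l : Fin n → ℕ) (h : Fin n → ℕ → ℝ)
    (hval : ValidBC l h)
    (hni : ∀ (i : Fin n) (j : ℕ), j + 1 < l i → h i (j + 1) ≤ h i j) :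
    ∃ (σ : Equiv.Perm (Fin n)) (q : Fin n → ℕ), IsGreedyWrt l h σ q ∧
      Feasible l h q ∧ packLen l q = OPT l h := by
  rcases Nat.eq_zero_or_pos n with hn | hn
  · subst hn
    have hfeas0 : Feasible l h (fun _ => 1) := ⟨fun i => i.elim0, fun c => by simp [cellLoad]⟩
    have hlen0 : packLen l (fun _ : Fin 0 => 1) = 0 := by simp [packLen, occupied]
    refine ⟨Equiv.refl _, fun _ => 1, ⟨fun h0 => by omega, fun k hk => by omega⟩, hfeas0, ?_⟩
    have hopt : OPT l h ≤ packLen l (fun _ : Fin 0 => 1) :=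
      Nat.sInf_le ⟨fun _ => 1, hfeas0, rfl⟩
    rw [hlen0]
    rw [hlen0] at hopt
    omega
  · obtain ⟨p, hpf, hlen, hgp⟩ := exists_gapless_opt l h hval
    set σ := Tuple.sort p with hσ
    have hmono : ∀ s t : Fin n, s ≤ t → p (σ s) ≤ p (σ t) := fun s t hst =>
      Tuple.monotone_sort p hst
    have hq_feas := grq_feasible l h σ hval hni p hpf hmono hn
    have hq_gap := grq_gapless l h σ hval hni p hpf hmono hn
    refine ⟨σ, grq l h σ, grq_isGreedy l h σ, hq_feas, ?_⟩
    obtain ⟨Mq, hoccq, hlenq⟩ := gapless_len l hn hval.1 hq_feas.1 hq_gap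
    obtain ⟨Mp, hoccp, hlenp⟩ := gapless_len l hn hval.1 hpf.1 hgp
    have h1 : OPT l h ≤ packLen l (grq l h σ) := Nat.sInf_le ⟨grq l h σ, hq_feas, rfl⟩
    have hMq1 : 1 ≤ Mq := by
      have hx : grq l h σ ⟨0, hn⟩ + 0 ∈ occupied l (grq l h σ) :=
        (mem_occupied l).mpr ⟨⟨0, hn⟩, 0, hval.1 _, rfl⟩
      rw [hoccq] at hx
      have := Finset.mem_Icc.mp hx
      omega
    have hMqmem : Mq ∈ occupied l (grq l h σ) := by
      rw [hoccq]; exact Finset.mem_Icc.mpr ⟨hMq1, le_refl _⟩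
    obtain ⟨i, j, hj, hij⟩ := (mem_occupied l).mp hMqmem
    have hqlep : grq l h σ i ≤ p i := grq_qle l h σ hval hni p hpf hmono hn i
    have hpmem : p i + j ∈ occupied l p := (mem_occupied l).mpr ⟨i, j, hj, rfl⟩
    have hple : p i + j ≤ Mp := by
      rw [hoccp] at hpmem; exact (Finset.mem_Icc.mp hpmem).2
    have h2 : packLen l (grq l h σ) ≤ OPT l h := by
      rw [hlenq, ← hlen, hlenp]; omega
    omega
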